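/- Let a_n be the number of ordered set partitions of [n] that word-avoid 213 and have no min-descents. For n ≥ 2, a_n = a_{n-1} + sum_{k=1}^{n-1} a_k, where the first term counts those in which 1 forms a singleton block and the summand a_{n-k+1}-type terms count those in which 1 lies in a block of size ≥ 2 with 2 in position k of the word. -/

import Mathlib

/-- The word of an ordered set partition: concatenate the blocks,
listing the elements of each block in increasing order. -/
def word (π : List (Finset ℕ)) : List ℕ :=
  (π.map (fun B => Finset.sort B (· ≤ ·))).flatten

/-- `π` is an ordered set partition of `[n] = {1,…,n}`: a list of nonempty,
pairwise disjoint finsets whose union is `{1,…,n}`. -/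
def IsOSP (n : ℕ) (π : List (Finset ℕ)) : Prop :=
  (∀ B ∈ π, B.Nonempty) ∧ π.Pairwise Disjoint ∧
    π.foldr (· ∪ ·) ∅ = Finset.Icc 1 n

noncomputable def minB (B : Finset ℕ) : ℕ := sInf (B : Set ℕ)
def maxB (B : Finset ℕ) : ℕ := B.sup id

/-- number of descents of a word -/
def desCount (w : List ℕ) : ℕ :=
  ((List.range (w.length - 1)).filter (fun i => w.getD (i + 1) 0 < w.getD i 0)).length

noncomputable def mindes (π : List (Finset ℕ)) : ℕ :=
  ((List.range (π.length - 1)).filter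
    (fun i => minB (π.getD (i + 1) ∅) < minB (π.getD i ∅))).length

def maxdes (π : List (Finset ℕ)) : ℕ :=
  ((List.range (π.length - 1)).filter
    (fun i => maxB (π.getD (i + 1) ∅) < maxB (π.getD i ∅))).length

noncomputable def pdes (π : List (Finset ℕ)) : ℕ :=
  ((List.range (π.length - 1)).filter
    (fun i => maxB (π.getD (i + 1) ∅) < minB (π.getD i ∅))).length

def Avoids12 (w : List ℕ) : Prop :=
  ¬ ∃ i j : ℕ, i < j ∧ j < w.length ∧ w.getD i 0 < w.getD j 0

def Avoids21 (w : List ℕ) : Prop :=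
  ¬ ∃ i j : ℕ, i < j ∧ j < w.length ∧ w.getD j 0 < w.getD i 0

def Avoids123 (w : List ℕ) : Prop :=
  ¬ ∃ i j k : ℕ, i < j ∧ j < k ∧ k < w.length ∧
    w.getD i 0 < w.getD j 0 ∧ w.getD j 0 < w.getD k 0

def Avoids132 (w : List ℕ) : Prop :=
  ¬ ∃ i j k : ℕ, i < j ∧ j < k ∧ k < w.length ∧
    w.getD i 0 < w.getD k 0 ∧ w.getD k 0 < w.getD j 0

def Avoids213 (w : List ℕ) : Prop :=
  ¬ ∃ i j k : ℕ, i < j ∧ j < k ∧ k < w.length ∧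
    w.getD j 0 < w.getD i 0 ∧ w.getD i 0 < w.getD k 0

def Avoids312 (w : List ℕ) : Prop :=
  ¬ ∃ i j k : ℕ, i < j ∧ j < k ∧ k < w.length ∧
    w.getD j 0 < w.getD k 0 ∧ w.getD k 0 < w.getD i 0

def Avoids321 (w : List ℕ) : Prop :=
  ¬ ∃ i j k : ℕ, i < j ∧ j < k ∧ k < w.length ∧
    w.getD k 0 < w.getD j 0 ∧ w.getD j 0 < w.getD i 0

/-- reverse-complement of an ordered set partition of `[n]` -/
def rcomp (n : ℕ) (π : List (Finset ℕ)) : List (Finset ℕ) :=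
  (π.map (fun B => B.image (fun a => n + 1 - a))).reverse

/-- `aSeq n` is the number of ordered set partitions of `[n]` word-avoiding
`213` with no min-descents. -/
noncomputable def aSeq (n : ℕ) : ℕ :=
  Nat.card {π : List (Finset ℕ) // IsOSP n π ∧ Avoids213 (word π) ∧ mindes π = 0}


section Aux
open List

/-- sublist form of 213-avoidance -/
def Av (w : List ℕ) : Prop :=
  ∀ a b c : ℕ, [a, b, c] <+ w → ¬ (b < a ∧ a < c)

lemma avoids213_iff (w : List ℕ) : Avoids213 w ↔ Av w := by
  constructor
  · intro h a b c hsub ⟨h1, h2⟩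
    apply h
    obtain ⟨is, his, hp⟩ := List.sublist_eq_map_getElem hsub
    match is, his with
    | [i, j, k], his =>
      simp only [List.map, List.cons.injEq, and_true, Fin.getElem_fin] at his
      obtain ⟨ha, hb, hc⟩ := his
      refine ⟨i, j, k, ?_, ?_, k.isLt, ?_, ?_⟩
      · exact (List.pairwise_cons.mp hp).1 j (by simp)
      · exact (List.pairwise_cons.mp (List.pairwise_cons.mp hp).2).1 k (by simp)
      · rw [List.getD_eq_getElem _ _ j.isLt, List.getD_eq_getElem _ _ i.isLt]
        simp only [← ha, ← hb]; exact h1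
      · rw [List.getD_eq_getElem _ _ i.isLt, List.getD_eq_getElem _ _ k.isLt]
        simp only [← ha, ← hc]; exact h2
  · rintro h ⟨i, j, k, hij, hjk, hk, h1, h2⟩
    have hi : i < w.length := lt_trans (lt_trans hij hjk) hk
    have hj : j < w.length := lt_trans hjk hk
    have hsub : [w.get ⟨i, hi⟩, w.get ⟨j, hj⟩, w.get ⟨k, hk⟩] <+ w := by
      have := List.map_getElem_sublist (l := w) (is := [⟨i, hi⟩, ⟨j, hj⟩, ⟨k, hk⟩]) ?_
      · simpa using this
      · simp [hij, hjk, lt_trans hij hjk]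
    refine h _ _ _ hsub ⟨?_, ?_⟩
    · rw [List.getD_eq_getElem _ _ hj, List.getD_eq_getElem _ _ hi] at h1
      simpa using h1
    · rw [List.getD_eq_getElem _ _ hi, List.getD_eq_getElem _ _ hk] at h2
      simpa using h2

lemma Av.sublist {v w : List ℕ} (h : Av w) (hvw : v <+ w) : Av v :=
  fun a b c hs => h a b c (hs.trans hvw)

lemma av_map_succ {w : List ℕ} : Av (w.map (· + 1)) ↔ Av w := by
  constructor
  · intro h a b c hs hp
    exact h (a+1) (b+1) (c+1) (by simpa using hs.map (· + 1)) (by omega)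
  · intro h a b c hs hp
    rw [List.sublist_map_iff] at hs
    obtain ⟨l, hl, he⟩ := hs
    match l, he with
    | [a', b', c'], he =>
      simp only [List.map, List.cons.injEq, and_true] at he
      obtain ⟨ha, hb, hc⟩ := he
      subst ha; subst hb; subst hc
      refine h a' b' c' hl ⟨?_, ?_⟩
      · simpa using hp.1
      · simpa using hp.2

lemma av_cons {a : ℕ} {w : List ℕ} (hb : ∀ x ∈ w, a ≤ x) : Av (a :: w) ↔ Av w := by
  constructor
  · intro h; exact h.sublist (List.sublist_cons_self a w)
  · intro h x y z hs hp
    rw [List.sublist_cons_iff] at hs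
    rcases hs with hs | ⟨r, hr, hrs⟩
    · exact h x y z hs hp
    · obtain ⟨rfl, rfl⟩ : a = x ∧ r = [y, z] := by
        have := hr.symm; simp only [List.cons.injEq] at this; tauto
      have hy : y ∈ w := hrs.subset (by simp)
      exact absurd hp.1 (not_lt.mpr (hb y hy))



/-- two elements of a sorted list form a sublist -/
lemma pair_sublist {a b : ℕ} {l : List ℕ} (hl : l.Pairwise (· ≤ ·)) (hab : a < b)
    (ha : a ∈ l) (hb : b ∈ l) : [a, b] <+ l := by
  induction l with
  | nil => simp at ha
  | cons c t ih =>
    rcases List.mem_cons.mp ha with rfl | ha'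
    · have hb' : b ∈ t := by
        rcases List.mem_cons.mp hb with rfl | h
        · omega
        · exact h
      exact (List.singleton_sublist.mpr hb').cons₂ a
    · rcases List.mem_cons.mp hb with rfl | hb'
      · exact absurd (List.rel_of_pairwise_cons hl ha') (by omega)
      · exact (ih hl.of_cons ha' hb').cons c

/-- the key composition lemma: a sorted run of big values followed by an
avoiding word of small values avoids 213 -/
lemma av_append {T y : List ℕ} (hT : T.Pairwise (· ≤ ·))
    (hsep : ∀ a ∈ T, ∀ b ∈ y, b < a) (hy : Av y) : Av (T ++ y) := by
  intro a b c hs hp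
  rw [List.sublist_append_iff] at hs
  obtain ⟨l₁, l₂, he, h1, h2⟩ := hs
  rcases l₁ with _ | ⟨x, _ | ⟨u, _ | ⟨v, rest⟩⟩⟩
  · rw [List.nil_append] at he
    exact hy a b c (he ▸ h2) hp
  · simp only [List.cons_append, List.nil_append, List.cons.injEq] at he
    obtain ⟨rfl, he2⟩ := he
    rw [← he2] at h2
    exact absurd hp.2 (not_lt.mpr (hsep a (h1.subset (by simp)) c (h2.subset (by simp))).le)
  · simp only [List.cons_append, List.nil_append, List.cons.injEq] at he
    obtain ⟨rfl, rfl, he2⟩ := he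
    rw [← he2] at h2
    exact absurd hp.2 (not_lt.mpr (hsep a (h1.subset (by simp)) c (h2.subset (by simp))).le)
  · have hl := congrArg List.length he
    simp only [List.length_cons, List.length_append, List.length_nil] at hl
    have hrest : rest = [] := List.length_eq_zero_iff.mp (by omega)
    have hl2 : l₂ = [] := List.length_eq_zero_iff.mp (by omega)
    subst hrest hl2
    simp only [List.append_nil, List.cons.injEq] at he
    obtain ⟨rfl, rfl, rfl, -⟩ := he
    have hab : a ≤ b := List.rel_of_pairwise_cons (hT.sublist h1) (a' := b) (by simp)
    omega

lemma word_nil : word [] = [] := rfl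

lemma word_cons (B : Finset ℕ) (t : List (Finset ℕ)) :
    word (B :: t) = B.sort (· ≤ ·) ++ word t := rfl

lemma mem_word {x : ℕ} {l : List (Finset ℕ)} : x ∈ word l ↔ ∃ B ∈ l, x ∈ B := by
  simp [word, List.mem_flatten]

/-- up-shift of a partition -/
def upPart (l : List (Finset ℕ)) : List (Finset ℕ) := l.map (fun B => B.image (· + 1))

lemma succ_inj' : Function.Injective (fun x : ℕ => x + 1) := fun a b h => by simpa using h

lemma sort_image_succ (B : Finset ℕ) :
    (B.image (· + 1)).sort (· ≤ ·) = (B.sort (· ≤ ·)).map (· + 1) := by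
  refine (fun hp h2 => List.Perm.eq_of_pairwise' (Finset.pairwise_sort _ _) h2 hp) ?_ ?_
  · rw [← Multiset.coe_eq_coe]
    have h1 : (↑((B.image (· + 1)).sort (· ≤ ·)) : Multiset ℕ) = (B.image (· + 1)).val :=
      Finset.sort_eq _ _
    have h2 : (B.image (· + 1)).val = B.val.map (· + 1) := by
      rw [Finset.image_val, Multiset.dedup_eq_self.mpr]
      exact B.nodup.map succ_inj'
    rw [h1, h2, ← Finset.sort_eq B (· ≤ ·)]
    exact (Multiset.map_coe _ _).symm
  · exact List.Pairwise.map _ (fun h => by omega) (Finset.pairwise_sort B _)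

lemma word_upPart (l : List (Finset ℕ)) : word (upPart l) = (word l).map (· + 1) := by
  induction l with
  | nil => rfl
  | cons B t ih =>
    simp only [upPart, List.map_cons] at ih ⊢
    rw [word_cons, word_cons, sort_image_succ, List.map_append, ih]

lemma sort_min_cons {B : Finset ℕ} {a : ℕ} (ha : a ∈ B) (hmin : ∀ x ∈ B, a ≤ x) :
    B.sort (· ≤ ·) = a :: (B.erase a).sort (· ≤ ·) := by
  refine (fun hp h2 => List.Perm.eq_of_pairwise' (Finset.pairwise_sort _ _) h2 hp) ?_ ?_
  · rw [← Multiset.coe_eq_coe]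
    have : (↑(a :: (B.erase a).sort (· ≤ ·)) : Multiset ℕ)
        = a ::ₘ ↑((B.erase a).sort (· ≤ ·)) := rfl
    rw [Finset.sort_eq, this, Finset.sort_eq, Finset.erase_val, Multiset.cons_erase ha]
  · refine List.pairwise_cons.mpr ⟨fun b hb => ?_, Finset.pairwise_sort _ _⟩
    exact hmin b (Finset.mem_of_mem_erase (Finset.mem_sort (α := ℕ) (· ≤ ·) |>.mp hb))

lemma minB_eq {B : Finset ℕ} {a : ℕ} (ha : a ∈ B) (hmin : ∀ x ∈ B, a ≤ x) : minB B = a :=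
  le_antisymm (Nat.sInf_le ha) (hmin _ (Nat.sInf_mem ⟨a, ha⟩))

lemma minB_mem {B : Finset ℕ} (h : B.Nonempty) : minB B ∈ B := by
  obtain ⟨a, ha⟩ := h; exact Nat.sInf_mem ⟨a, ha⟩

lemma minB_le {B : Finset ℕ} {x : ℕ} (h : x ∈ B) : minB B ≤ x := Nat.sInf_le h

lemma minB_image_succ {B : Finset ℕ} (h : B.Nonempty) :
    minB (B.image (· + 1)) = minB B + 1 := by
  apply minB_eq
  · exact Finset.mem_image_of_mem _ (minB_mem h)
  · intro x hx
    obtain ⟨y, hy, rfl⟩ := Finset.mem_image.mp hx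
    exact Nat.add_le_add_right (minB_le hy) 1

lemma chain'_congr {α : Type*} {R S : α → α → Prop} {l : List α}
    (h : ∀ a ∈ l, ∀ b ∈ l, (R a b ↔ S a b)) : List.Chain' R l ↔ List.Chain' S l := by
  simp only [List.Chain', List.isChain_iff_getElem]
  constructor <;> intro H i hi
  · exact (h _ (List.getElem_mem _) _ (List.getElem_mem _)).mp (H i hi)
  · exact (h _ (List.getElem_mem _) _ (List.getElem_mem _)).mpr (H i hi)

lemma mindes_eq_zero_iff (π : List (Finset ℕ)) :
    mindes π = 0 ↔ List.Chain' (fun A B => minB A ≤ minB B) π := by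
  rw [mindes, List.length_eq_zero_iff, List.filter_eq_nil_iff, List.Chain', List.isChain_iff_getElem]
  constructor
  · intro h i hi
    have hi' : i ∈ List.range (π.length - 1) := List.mem_range.mpr (by omega)
    have := h i hi'
    simp only [decide_eq_true_eq] at this
    have h1 : i < π.length := by omega
    have h2 : i + 1 < π.length := by omega
    rw [List.getD_eq_getElem _ _ h1, List.getD_eq_getElem _ _ h2] at this
    exact not_lt.mp this
  · intro h i hi
    have hi' : i < π.length - 1 := List.mem_range.mp hi
    have := h i (by omega)
    simp only [decide_eq_true_eq]
    have h1 : i < π.length := by omega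
    have h2 : i + 1 < π.length := by omega
    rw [List.getD_eq_getElem _ _ h1, List.getD_eq_getElem _ _ h2]
    exact not_lt.mpr this




lemma foldr_union_cons (B : Finset ℕ) (t : List (Finset ℕ)) :
    (B :: t).foldr (· ∪ ·) ∅ = B ∪ t.foldr (· ∪ ·) ∅ := rfl

lemma mem_foldr_union {x : ℕ} {l : List (Finset ℕ)} :
    x ∈ l.foldr (· ∪ ·) ∅ ↔ ∃ B ∈ l, x ∈ B := by
  induction l with
  | nil => simp
  | cons B t ih => simp [foldr_union_cons, ih]

lemma foldr_union_upPart (l : List (Finset ℕ)) :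
    (upPart l).foldr (· ∪ ·) ∅ = (l.foldr (· ∪ ·) ∅).image (· + 1) := by
  induction l with
  | nil => simp [upPart]
  | cons B t ih =>
    simp only [upPart, List.map_cons, foldr_union_cons, Finset.image_union] at ih ⊢
    rw [ih]

lemma image_succ_Icc (a b : ℕ) :
    (Finset.Icc a b).image (· + 1) = Finset.Icc (a + 1) (b + 1) := by
  ext x
  simp only [Finset.mem_image, Finset.mem_Icc]
  constructor
  · rintro ⟨y, hy, rfl⟩; omega
  · intro h; exact ⟨x - 1, by omega, by omega⟩

lemma pairwise_upPart {l : List (Finset ℕ)} :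
    (upPart l).Pairwise _root_.Disjoint ↔ l.Pairwise _root_.Disjoint := by
  rw [upPart, List.pairwise_map]
  constructor
  · intro h; exact h.imp_of_mem (fun _ _ h' => (Finset.disjoint_image succ_inj').mp h')
  · intro h; exact h.imp_of_mem (fun _ _ h' => (Finset.disjoint_image succ_inj').mpr h')

lemma nonempty_upPart {l : List (Finset ℕ)} :
    (∀ B ∈ upPart l, B.Nonempty) ↔ (∀ B ∈ l, B.Nonempty) := by
  simp [upPart, Finset.image_nonempty]

lemma chain'_min_upPart {l : List (Finset ℕ)} (h : ∀ B ∈ l, B.Nonempty) :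
    List.Chain' (fun A B => minB A ≤ minB B) (upPart l) ↔
      List.Chain' (fun A B => minB A ≤ minB B) l := by
  simp only [List.Chain']; rw [upPart, List.isChain_map]
  refine chain'_congr (fun a ha b hb => ?_)
  constructor
  · intro h'
    have h1 := minB_image_succ (h a ha); have h2 := minB_image_succ (h b hb); omega
  · intro h'
    have h1 := minB_image_succ (h a ha); have h2 := minB_image_succ (h b hb); omega

/-- the conditions as a set -/
def Sset (n : ℕ) : Set (List (Finset ℕ)) :=
  {π | IsOSP n π ∧ Av (word π) ∧ List.Chain' (fun A B => minB A ≤ minB B) π}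

/-- master shift lemma -/
lemma mem_Sset_iff_upPart {m : ℕ} {σ : List (Finset ℕ)} :
    σ ∈ Sset m ↔
      ((∀ B ∈ upPart σ, B.Nonempty) ∧ (upPart σ).Pairwise _root_.Disjoint ∧
        (upPart σ).foldr (· ∪ ·) ∅ = Finset.Icc 2 (m + 1)) ∧
      Av (word (upPart σ)) ∧
      List.Chain' (fun A B => minB A ≤ minB B) (upPart σ) := by
  constructor
  · rintro ⟨⟨hne, hdisj, hcov⟩, hav, hch⟩
    refine ⟨⟨nonempty_upPart.mpr hne, pairwise_upPart.mpr hdisj, ?_⟩, ?_, ?_⟩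
    · rw [foldr_union_upPart, hcov, image_succ_Icc]
    · rw [word_upPart]; exact av_map_succ.mpr hav
    · exact (chain'_min_upPart hne).mpr hch
  · rintro ⟨⟨hne, hdisj, hcov⟩, hav, hch⟩
    have hne' := nonempty_upPart.mp hne
    refine ⟨⟨hne', pairwise_upPart.mp hdisj, ?_⟩, ?_, ?_⟩
    · apply Finset.image_injective succ_inj'
      rw [← foldr_union_upPart, hcov, image_succ_Icc]
    · rw [word_upPart] at hav; exact av_map_succ.mp hav
    · exact (chain'_min_upPart hne').mp hch

lemma disjoint_foldr {B : Finset ℕ} {t : List (Finset ℕ)}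
    (h : ∀ C ∈ t, _root_.Disjoint B C) : _root_.Disjoint B (t.foldr (· ∪ ·) ∅) := by
  induction t with
  | nil => simp
  | cons C t ih =>
    rw [foldr_union_cons, Finset.disjoint_union_right]
    exact ⟨h C (by simp), ih (fun D hD => h D (by simp [hD]))⟩

lemma length_le_card {l : List (Finset ℕ)} (hne : ∀ B ∈ l, B.Nonempty)
    (hdisj : l.Pairwise _root_.Disjoint) : l.length ≤ (l.foldr (· ∪ ·) ∅).card := by
  induction l with
  | nil => simp
  | cons B t ih =>
    rw [List.pairwise_cons] at hdisj
    rw [foldr_union_cons, List.length_cons,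
      Finset.card_union_of_disjoint (disjoint_foldr hdisj.1)]
    have h1 : 1 ≤ B.card := Finset.card_pos.mpr (hne B (by simp))
    have h2 := ih (fun C hC => hne C (by simp [hC])) hdisj.2
    omega

lemma block_subset {l : List (Finset ℕ)} {B : Finset ℕ} (hB : B ∈ l) :
    B ⊆ l.foldr (· ∪ ·) ∅ := fun x hx => mem_foldr_union.mpr ⟨B, hB, hx⟩

lemma Sset_finite (n : ℕ) : (Sset n).Finite := by
  have : Finite {B : Finset ℕ // B ⊆ Finset.Icc 1 n} := by
    refine Finite.of_injective
      (fun B => (⟨B.1, Finset.mem_powerset.mpr B.2⟩ :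
        {C // C ∈ (Finset.Icc 1 n).powerset})) ?_
    intro a b h; simpa [Subtype.ext_iff] using h
  have hfin : {l : List {B : Finset ℕ // B ⊆ Finset.Icc 1 n} | l.length ≤ n}.Finite :=
    List.finite_length_le _ n
  have himg := hfin.image (fun l => l.map (fun B => B.1))
  apply Set.Finite.subset himg
  rintro π ⟨⟨hne, hdisj, hcov⟩, -, -⟩
  have hsub : ∀ B ∈ π, B ⊆ Finset.Icc 1 n := fun B hB => hcov ▸ block_subset hB
  refine ⟨π.attach.map (fun B => ⟨B.1, hsub B.1 B.2⟩), ?_, ?_⟩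
  · simp only [Set.mem_setOf_eq, List.length_map, List.length_attach]
    have := length_le_card hne hdisj
    rw [hcov] at this
    simpa using this
  · simp [List.map_map, Function.comp]

example : True := trivial

lemma up_down (C : Finset ℕ) (h : ∀ x ∈ C, 1 ≤ x) :
    (C.image (· - 1)).image (· + 1) = C := by
  rw [Finset.image_image]
  ext x
  simp only [Finset.mem_image, Function.comp_apply]
  constructor
  · rintro ⟨y, hy, rfl⟩
    have := h y hy
    have hxy : y - 1 + 1 = y := by omega
    rw [hxy]; exact hy
  · intro hx
    exact ⟨x, hx, by have := h x hx; omega⟩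

def downPart (l : List (Finset ℕ)) : List (Finset ℕ) := l.map (fun B => B.image (· - 1))

lemma upPart_downPart {l : List (Finset ℕ)} (h : ∀ B ∈ l, ∀ x ∈ B, 1 ≤ x) :
    upPart (downPart l) = l := by
  rw [upPart, downPart, List.map_map]
  conv_rhs => rw [← List.map_id l]
  apply List.map_congr_left
  intro B hB
  exact up_down B (h B hB)

instance : IsTrans (Finset ℕ) (fun A B => minB A ≤ minB B) :=
  ⟨fun _ _ _ h1 h2 => le_trans h1 h2⟩

lemma Sset_ne_nil {n : ℕ} {π : List (Finset ℕ)} (hn : 1 ≤ n) (hπ : π ∈ Sset n) :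
    π ≠ [] := by
  rintro rfl
  have := hπ.1.2.2
  simp only [List.foldr_nil] at this
  have h1 : (1 : ℕ) ∈ Finset.Icc 1 n := by simp [Finset.mem_Icc]; omega
  rw [← this] at h1
  simp at h1

lemma elem_bounds {n : ℕ} {π : List (Finset ℕ)} (hπ : π ∈ Sset n) {B : Finset ℕ}
    (hB : B ∈ π) {x : ℕ} (hx : x ∈ B) : 1 ≤ x ∧ x ≤ n := by
  have := block_subset hB hx
  rw [hπ.1.2.2] at this
  simpa [Finset.mem_Icc] using this

lemma one_mem_head {n : ℕ} {π : List (Finset ℕ)} (hn : 1 ≤ n) (hπ : π ∈ Sset n) :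
    1 ∈ π.headD ∅ := by
  obtain ⟨B0, t, rfl⟩ := List.exists_cons_of_ne_nil (Sset_ne_nil hn hπ)
  obtain ⟨⟨hne, hdisj, hcov⟩, hav, hch⟩ := id hπ
  have h1 : (1 : ℕ) ∈ (B0 :: t).foldr (· ∪ ·) ∅ := by
    rw [hcov]; simp [Finset.mem_Icc]; omega
  obtain ⟨B, hB, h1B⟩ := mem_foldr_union.mp h1
  have hpw : List.Pairwise (fun A B => minB A ≤ minB B) (B0 :: t) :=
    (List.isChain_iff_pairwise.mp hch)
  have hmin : minB B0 ≤ 1 := by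
    rcases List.mem_cons.mp hB with rfl | hBt
    · exact minB_le h1B
    · exact le_trans (List.rel_of_pairwise_cons hpw hBt) (minB_le h1B)
  have hmem : minB B0 ∈ B0 := minB_mem (hne B0 (by simp))
  have : 1 ≤ minB B0 := (elem_bounds hπ (by simp) hmem).1
  have : minB B0 = 1 := by omega
  rw [List.headD_cons]
  rw [← this]; exact hmem

lemma two_mem_head_or {n : ℕ} {π : List (Finset ℕ)} (hn : 2 ≤ n) (hπ : π ∈ Sset n) :
    2 ∈ π.headD ∅ ∨ (∃ B0 C t, π = B0 :: C :: t ∧ 2 ∈ C) := by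
  obtain ⟨B0, t, rfl⟩ := List.exists_cons_of_ne_nil (Sset_ne_nil (by omega) hπ)
  obtain ⟨⟨hne, hdisj, hcov⟩, hav, hch⟩ := id hπ
  have h2 : (2 : ℕ) ∈ (B0 :: t).foldr (· ∪ ·) ∅ := by
    rw [hcov]; simp [Finset.mem_Icc]; omega
  obtain ⟨B, hB, h2B⟩ := mem_foldr_union.mp h2
  have h1B0 : 1 ∈ B0 := by
    have := one_mem_head (by omega) hπ; simpa using this
  rcases List.mem_cons.mp hB with rfl | hBt
  · left; simpa using h2B
  · right
    obtain ⟨C, t', rfl⟩ := List.exists_cons_of_ne_nil (List.ne_nil_of_mem hBt)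
    refine ⟨B0, C, t', rfl, ?_⟩
    have hpw : List.Pairwise (fun A B => minB A ≤ minB B) (B0 :: C :: t') :=
      (List.isChain_iff_pairwise.mp hch)
    -- minB C ≤ minB B = 2, and minB C ≥ 2, so 2 ∈ C
    have hminB : minB B ≤ 2 := minB_le h2B
    have hCB : minB C ≤ minB B := by
      rcases List.mem_cons.mp hBt with rfl | hBt'
      · exact le_refl _
      · exact List.rel_of_pairwise_cons (List.pairwise_cons.mp hpw).2 hBt'
    have hCmem : minB C ∈ C := minB_mem (hne C (by simp))
    have hC1 : 1 ≤ minB C := (elem_bounds hπ (by simp) hCmem).1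
    have hCne1 : minB C ≠ 1 := by
      intro h
      have h1C : (1 : ℕ) ∈ C := h ▸ hCmem
      have hd : _root_.Disjoint B0 C := by
        have := List.pairwise_cons.mp hdisj
        exact this.1 C (by simp)
      exact Finset.disjoint_left.mp hd h1B0 h1C
    have : minB C = 2 := by omega
    rw [← this]; exact hCmem

example : True := trivial

/-- key 213-avoidance consequence: if `1 ∈ B0` but `2 ∉ B0`, every element of a
later block (other than 2) is smaller than every element of `B0` other than 1 -/
lemma later_smaller {n : ℕ} {B0 C : Finset ℕ} {t : List (Finset ℕ)}
    (hπ : (B0 :: C :: t) ∈ Sset n) (h2C : 2 ∈ C)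
    {x : ℕ} (hx : x ∈ B0) (hx1 : x ≠ 1) (hx2 : x ∉ ({2} : Finset ℕ))
    {y : ℕ} (hy : y ∈ (C :: t).foldr (· ∪ ·) ∅) (hy2 : y ≠ 2) : y < x := by
  by_contra hcon
  push_neg at hcon
  -- x ≥ 3
  have hxb := elem_bounds hπ (by simp) hx
  have hx3 : 3 ≤ x := by
    simp only [Finset.mem_singleton] at hx2
    omega
  have hyB : ∃ B ∈ C :: t, y ∈ B := mem_foldr_union.mp hy
  obtain ⟨B, hB, hyB⟩ := hyB
  have hyb := elem_bounds hπ (List.mem_cons_of_mem B0 hB) hyB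
  -- x ≠ y since x ∈ B0, y in a later block
  have hdisj := hπ.1.2.1
  have hxy : x ≠ y := by
    rintro rfl
    have hd : _root_.Disjoint B0 B :=
      (List.pairwise_cons.mp hdisj).1 B hB
    exact Finset.disjoint_left.mp hd hx hyB
  have hxy' : x < y := by omega
  -- build the sublist [x, 2, y]
  have hsx : [x] <+ B0.sort (· ≤ ·) := by
    rw [List.singleton_sublist, Finset.mem_sort]
    exact hx
  have hs2y : [2, y] <+ (C.sort (· ≤ ·)) ++ word t := by
    rcases List.mem_cons.mp hB with rfl | hBt
    · -- y ∈ C : use pair_sublist inside sort C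
      have := pair_sublist (Finset.pairwise_sort B _) (show 2 < y by omega)
        ((Finset.mem_sort _).mpr h2C) ((Finset.mem_sort _).mpr hyB)
      exact this.trans (List.sublist_append_left _ _)
    · have h2s : [2] <+ C.sort (· ≤ ·) := by
        rw [List.singleton_sublist, Finset.mem_sort]; exact h2C
      have hys : [y] <+ word t := by
        rw [List.singleton_sublist, mem_word]
        exact ⟨B, hBt, hyB⟩
      exact List.Sublist.append h2s hys
  have hsub : [x, 2, y] <+ word (B0 :: C :: t) := by
    rw [word_cons, word_cons]
    exact List.Sublist.append hsx hs2y
  exact hπ.2.1 x 2 y hsub ⟨by omega, hxy'⟩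

/-- a subset of `[1,n]` all of whose elements dominate the rest of `[1,n]`
is a top interval -/
lemma top_interval {n : ℕ} {S : Finset ℕ} (hS : S ⊆ Finset.Icc 1 n)
    (h : ∀ y ∈ Finset.Icc 1 n, y ∉ S → ∀ x ∈ S, y < x) :
    S = Finset.Icc (n - S.card + 1) n := by
  have hcard : S.card ≤ n := by
    have := Finset.card_le_card hS
    simpa [Nat.card_Icc] using this
  refine (Finset.eq_of_subset_of_card_le ?_ ?_).symm
  · -- Icc (n - S.card + 1) n ⊆ S
    intro z hz
    rw [Finset.mem_Icc] at hz
    by_contra hzS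
    -- z ∈ Icc 1 n \ S, so S ⊆ Icc (z+1) n and S.card ≤ n - z
    have hzIcc : z ∈ Finset.Icc 1 n := by rw [Finset.mem_Icc]; omega
    have hsub : S ⊆ Finset.Icc (z + 1) n := by
      intro x hxS
      rw [Finset.mem_Icc]
      have := h z hzIcc hzS x hxS
      have := hS hxS
      rw [Finset.mem_Icc] at this
      omega
    have := Finset.card_le_card hsub
    rw [Nat.card_Icc] at this
    omega
  · rw [Nat.card_Icc]; omega

lemma classify {n : ℕ} (hn : 2 ≤ n) {π : List (Finset ℕ)} (hπ : π ∈ Sset n) :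
    π.headD ∅ = {1} ∨ 2 ∈ π.headD ∅ ∨
      ∃ k ∈ Finset.Icc 1 (n - 2), π.headD ∅ = insert 1 (Finset.Icc (k + 2) n) := by
  have h1 : 1 ∈ π.headD ∅ := one_mem_head (by omega) hπ
  by_cases h2 : 2 ∈ π.headD ∅
  · exact Or.inr (Or.inl h2)
  by_cases hsing : π.headD ∅ = {1}
  · exact Or.inl hsing
  right; right
  -- B0 := head; 2 ∈ second block
  rcases two_mem_head_or hn hπ with h2' | ⟨B0, C, t, hform, h2C⟩
  · exact absurd h2' h2
  have hhead : π.headD ∅ = B0 := by rw [hform]; rfl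
  rw [hhead] at h1 h2 hsing
  subst hform
  -- the set U of non-1 elements of B0
  set U := B0.erase 1 with hU
  have hUcard_pos : 0 < U.card := by
    rw [Finset.card_pos]
    by_contra hne
    rw [Finset.not_nonempty_iff_eq_empty] at hne
    apply hsing
    ext z
    simp only [Finset.mem_singleton]
    constructor
    · intro hz
      by_contra hz1
      have : z ∈ U := Finset.mem_erase.mpr ⟨hz1, hz⟩
      rw [hne] at this; simp at this
    · rintro rfl; exact h1
  -- U is a top interval of Icc 1 n
  have hUsub : U ⊆ Finset.Icc 1 n := by
    intro x hxU
    have := elem_bounds hπ (by simp) (Finset.mem_of_mem_erase hxU)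
    rw [Finset.mem_Icc]; omega
  have hUtop : ∀ y ∈ Finset.Icc 1 n, y ∉ U → ∀ x ∈ U, y < x := by
    intro y hy hyU x hxU
    rw [Finset.mem_Icc] at hy
    have hx1 : x ≠ 1 := (Finset.mem_erase.mp hxU).1
    have hxB0 : x ∈ B0 := Finset.mem_of_mem_erase hxU
    have hx2 : x ∉ ({2} : Finset ℕ) := by
      simp only [Finset.mem_singleton]
      rintro rfl; exact h2 hxB0
    have hxb := elem_bounds hπ (by simp) hxB0
    -- cases on y
    by_cases hy1 : y = 1
    · subst hy1
      simp only [Finset.mem_singleton] at hx2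
      omega
    by_cases hy2 : y = 2
    · subst hy2
      simp only [Finset.mem_singleton] at hx2
      omega
    -- y ∉ B0 (else y ∈ U), so y in a later block
    have hyB0 : y ∉ B0 := by
      intro hyB0
      exact hyU (Finset.mem_erase.mpr ⟨hy1, hyB0⟩)
    have hyfold : y ∈ (C :: t).foldr (· ∪ ·) ∅ := by
      have hycov : y ∈ (B0 :: C :: t).foldr (· ∪ ·) ∅ := by
        rw [hπ.1.2.2, Finset.mem_Icc]; omega
      rw [foldr_union_cons, Finset.mem_union] at hycov
      tauto
    exact later_smaller hπ h2C hxB0 hx1 hx2 hyfold hy2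
  have hUeq := top_interval hUsub hUtop
  -- k := n - U.card - 1
  have h2U : (2 : ℕ) ∉ U := fun h' => h2 (Finset.mem_of_mem_erase h')
  have hUule : U.card ≤ n - 2 := by
    -- U ⊆ Icc 3 n
    have : U ⊆ Finset.Icc 3 n := by
      intro x hxU
      have h3 := hUtop 2 (by rw [Finset.mem_Icc]; omega) h2U x hxU
      have := hUsub hxU
      rw [Finset.mem_Icc] at this ⊢
      omega
    have := Finset.card_le_card this
    rw [Nat.card_Icc] at this
    omega
  refine ⟨n - 1 - U.card, ?_, ?_⟩
  · rw [Finset.mem_Icc]; omega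
  · rw [List.headD_cons]
    have hk2 : n - 1 - U.card + 2 = n - U.card + 1 := by omega
    rw [hk2, ← hUeq, hU]
    exact (Finset.insert_erase h1).symm

example : True := trivial

lemma minB_singleton_one : minB ({1} : Finset ℕ) = 1 :=
  minB_eq (by simp) (by simp)

lemma T0_eq {n : ℕ} (hn : 2 ≤ n) :
    {π ∈ Sset n | π.headD ∅ = {1}} =
      (fun σ => ({1} : Finset ℕ) :: upPart σ) '' Sset (n - 1) := by
  have hn1 : n - 1 + 1 = n := by omega
  ext π
  simp only [Set.mem_setOf_eq, Set.mem_image]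
  constructor
  · rintro ⟨hπ, hhead⟩
    obtain ⟨B0, t, rfl⟩ := List.exists_cons_of_ne_nil (Sset_ne_nil (by omega) hπ)
    rw [List.headD_cons] at hhead
    subst hhead
    have h1t : ∀ B ∈ t, (1 : ℕ) ∉ B := by
      intro B hB h1B
      have hd : _root_.Disjoint {1} B := (List.pairwise_cons.mp hπ.1.2.1).1 B hB
      exact Finset.disjoint_left.mp hd (by simp) h1B
    have hge : ∀ B ∈ t, ∀ x ∈ B, 1 ≤ x := fun B hB x hx =>
      (elem_bounds hπ (by simp [hB]) hx).1
    refine ⟨downPart t, ?_, ?_⟩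
    · rw [mem_Sset_iff_upPart, upPart_downPart hge, hn1]
      refine ⟨⟨fun B hB => hπ.1.1 B (by simp [hB]),
        (List.pairwise_cons.mp hπ.1.2.1).2, ?_⟩, ?_, ?_⟩
      · ext x
        constructor
        · intro hx
          have hxn : x ∈ Finset.Icc 1 n := by
            rw [← hπ.1.2.2, foldr_union_cons, Finset.mem_union]; right; exact hx
          obtain ⟨B, hB, hxB⟩ := mem_foldr_union.mp hx
          have : x ≠ 1 := fun h => h1t B hB (h ▸ hxB)
          rw [Finset.mem_Icc] at hxn ⊢; omega
        · intro hx
          rw [Finset.mem_Icc] at hx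
          have hx' : x ∈ Finset.Icc 1 n := by rw [Finset.mem_Icc]; omega
          rw [← hπ.1.2.2, foldr_union_cons, Finset.mem_union] at hx'
          rcases hx' with h | h
          · simp only [Finset.mem_singleton] at h; omega
          · exact h
      · refine hπ.2.1.sublist ?_
        rw [word_cons]
        exact List.sublist_append_right _ _
      · exact hπ.2.2.tail
    · rw [upPart_downPart hge]
  · rintro ⟨σ, hσ, rfl⟩
    rw [mem_Sset_iff_upPart, hn1] at hσ
    obtain ⟨⟨hne, hdisj, hcov⟩, hav, hch⟩ := hσ
    have hblocks2 : ∀ B ∈ upPart σ, ∀ x ∈ B, 2 ≤ x := by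
      intro B hB x hx
      have : x ∈ Finset.Icc 2 n := hcov ▸ block_subset hB hx
      rw [Finset.mem_Icc] at this; omega
    refine ⟨⟨⟨?_, ?_, ?_⟩, ?_, ?_⟩, rfl⟩
    · rintro B hB
      rcases List.mem_cons.mp hB with rfl | hB'
      · exact ⟨1, by simp⟩
      · exact hne B hB'
    · rw [List.pairwise_cons]
      refine ⟨fun B hB => ?_, hdisj⟩
      rw [Finset.disjoint_left]
      rintro a ha
      simp only [Finset.mem_singleton] at ha
      subst ha
      intro h1B
      exact absurd (hblocks2 B hB 1 h1B) (by omega)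
    · rw [foldr_union_cons, hcov]
      ext x
      simp only [Finset.mem_union, Finset.mem_singleton, Finset.mem_Icc]
      omega
    · rw [word_cons, Finset.sort_singleton]
      have : ([1] : List ℕ) ++ word (upPart σ) = 1 :: word (upPart σ) := rfl
      rw [this, av_cons]
      · exact hav
      · intro x hx
        obtain ⟨B, hB, hxB⟩ := mem_word.mp hx
        have := hblocks2 B hB x hxB
        omega
    · simp only [List.Chain']; rw [List.isChain_cons]
      refine ⟨fun B hB => ?_, hch⟩
      rw [minB_singleton_one]
      have hBmem := List.mem_of_mem_head? hB
      have hBne := hne B hBmem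
      have := hblocks2 B hBmem (minB B) (minB_mem hBne)
      omega

example : True := trivial

lemma T1_eq {n : ℕ} (hn : 2 ≤ n) :
    {π ∈ Sset n | 2 ∈ π.headD ∅} =
      (fun σ => insert 1 ((σ.headD ∅).image (· + 1)) :: upPart σ.tail) '' Sset (n - 1) := by
  have hn1 : n - 1 + 1 = n := by omega
  ext π
  simp only [Set.mem_setOf_eq, Set.mem_image]
  constructor
  · rintro ⟨hπ, hhead⟩
    obtain ⟨B0, t, rfl⟩ := List.exists_cons_of_ne_nil (Sset_ne_nil (by omega) hπ)
    rw [List.headD_cons] at hhead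
    have h1B0 : 1 ∈ B0 := by
      have := one_mem_head (by omega) hπ; simpa using this
    have h1t : ∀ B ∈ t, (1 : ℕ) ∉ B := by
      intro B hB h1B
      have hd : _root_.Disjoint B0 B := (List.pairwise_cons.mp hπ.1.2.1).1 B hB
      exact Finset.disjoint_left.mp hd h1B0 h1B
    have hge : ∀ B ∈ (B0.erase 1) :: t, ∀ x ∈ B, 1 ≤ x := by
      rintro B hB x hx
      rcases List.mem_cons.mp hB with rfl | hB'
      · exact (elem_bounds hπ (by simp) (Finset.mem_of_mem_erase hx)).1
      · exact (elem_bounds hπ (by simp [hB']) hx).1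
    have hsortB0 : B0.sort (· ≤ ·) = 1 :: (B0.erase 1).sort (· ≤ ·) :=
      sort_min_cons h1B0 (fun x hx => (elem_bounds hπ (by simp) hx).1)
    have hup : upPart (downPart ((B0.erase 1) :: t)) = (B0.erase 1) :: t :=
      upPart_downPart hge
    refine ⟨downPart ((B0.erase 1) :: t), ?_, ?_⟩
    · rw [mem_Sset_iff_upPart, hup, hn1]
      refine ⟨⟨?_, ?_, ?_⟩, ?_, ?_⟩
      · rintro B hB
        rcases List.mem_cons.mp hB with rfl | hB'
        · exact ⟨2, Finset.mem_erase.mpr ⟨by omega, hhead⟩⟩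
        · exact hπ.1.1 B (by simp [hB'])
      · rw [List.pairwise_cons]
        refine ⟨fun B hB => ?_, (List.pairwise_cons.mp hπ.1.2.1).2⟩
        exact Finset.disjoint_of_subset_left (Finset.erase_subset _ _)
          ((List.pairwise_cons.mp hπ.1.2.1).1 B hB)
      · ext x
        rw [foldr_union_cons, Finset.mem_union]
        constructor
        · intro hx
          have hx1 : x ≠ 1 := by
            rintro rfl
            rcases hx with h | h
            · exact (Finset.mem_erase.mp h).1 rfl
            · obtain ⟨B, hB, hxB⟩ := mem_foldr_union.mp h
              exact h1t B hB hxB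
          have hxn : x ∈ Finset.Icc 1 n := by
            rw [← hπ.1.2.2, foldr_union_cons, Finset.mem_union]
            rcases hx with h | h
            · exact Or.inl (Finset.mem_of_mem_erase h)
            · exact Or.inr h
          rw [Finset.mem_Icc] at hxn ⊢
          omega
        · intro hx
          rw [Finset.mem_Icc] at hx
          have hx' : x ∈ Finset.Icc 1 n := by rw [Finset.mem_Icc]; omega
          rw [← hπ.1.2.2, foldr_union_cons, Finset.mem_union] at hx'
          rcases hx' with h | h
          · exact Or.inl (Finset.mem_erase.mpr ⟨by omega, h⟩)
          · exact Or.inr h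
      · refine hπ.2.1.sublist ?_
        have hw : word (B0 :: t) = 1 :: word (B0.erase 1 :: t) := by
          rw [word_cons, word_cons, hsortB0, List.cons_append]
        rw [hw]
        exact List.sublist_cons_self _ _
      · simp only [List.Chain']; rw [List.isChain_cons]
        refine ⟨?_, hπ.2.2.tail⟩
        intro C hC
        have hCmem := List.mem_of_mem_head? hC
        have hCne := hπ.1.1 C (by simp [hCmem])
        have hminE : minB (B0.erase 1) = 2 := by
          apply minB_eq (Finset.mem_erase.mpr ⟨by omega, hhead⟩)
          intro x hx
          have h1 := (elem_bounds hπ (by simp) (Finset.mem_of_mem_erase hx)).1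
          have h2 := (Finset.mem_erase.mp hx).1
          omega
        rw [hminE]
        have hm := minB_mem hCne
        have h1 := (elem_bounds hπ (by simp [hCmem]) hm).1
        have h2 : minB C ≠ 1 := fun h => h1t C hCmem (h ▸ hm)
        omega
    · have hd : downPart (B0.erase 1 :: t) = (B0.erase 1).image (· - 1) :: downPart t := rfl
      rw [hd, List.headD_cons, List.tail_cons,
        up_down _ (fun x hx => hge _ (by simp) x hx), Finset.insert_erase h1B0,
        upPart_downPart (fun B hB x hx => hge B (by simp [hB]) x hx)]
  · rintro ⟨σ, hσ, rfl⟩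
    have hσne : σ ≠ [] := Sset_ne_nil (by omega) hσ
    obtain ⟨B, s, rfl⟩ := List.exists_cons_of_ne_nil hσne
    simp only [List.headD_cons, List.tail_cons]
    have h1B : 1 ∈ B := by
      have := one_mem_head (by omega) hσ; simpa using this
    rw [mem_Sset_iff_upPart, hn1] at hσ
    obtain ⟨⟨hne, hdisj, hcov⟩, hav, hch⟩ := hσ
    have hupcons : upPart (B :: s) = B.image (· + 1) :: upPart s := rfl
    rw [hupcons] at hne hdisj hcov hav hch
    have hblocks2 : ∀ C ∈ B.image (· + 1) :: upPart s, ∀ x ∈ C, 2 ≤ x := by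
      intro C hC x hx
      have : x ∈ Finset.Icc 2 n := by
        rw [← hcov]
        exact block_subset hC hx
      rw [Finset.mem_Icc] at this; omega
    have h1nimg : (1 : ℕ) ∉ B.image (· + 1) := fun h =>
      absurd (hblocks2 _ (by simp) 1 h) (by omega)
    have hsortins : (insert 1 (B.image (· + 1))).sort (· ≤ ·)
        = 1 :: (B.image (· + 1)).sort (· ≤ ·) := by
      rw [sort_min_cons (Finset.mem_insert_self 1 _), Finset.erase_insert h1nimg]
      intro x hx
      rcases Finset.mem_insert.mp hx with rfl | h
      · exact le_refl 1
      · exact le_of_lt (by have := hblocks2 _ (by simp) x h; omega)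
    refine ⟨⟨⟨?_, ?_, ?_⟩, ?_, ?_⟩, ?_⟩
    · rintro C hC
      rcases List.mem_cons.mp hC with rfl | hC'
      · exact ⟨1, by simp⟩
      · exact hne C (by simp [hC'])
    · rw [List.pairwise_cons]
      refine ⟨fun C hC => ?_, (List.pairwise_cons.mp hdisj).2⟩
      rw [Finset.disjoint_insert_left]
      constructor
      · intro h1C
        exact absurd (hblocks2 C (by simp [hC]) 1 h1C) (by omega)
      · exact (List.pairwise_cons.mp hdisj).1 C hC
    · rw [foldr_union_cons]
      have : B.image (· + 1) ∪ (upPart s).foldr (· ∪ ·) ∅ = Finset.Icc 2 n := by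
        rw [← hcov, foldr_union_cons]
      rw [Finset.insert_union, this]
      ext x
      simp only [Finset.mem_insert, Finset.mem_Icc]
      omega
    · rw [word_cons, hsortins, List.cons_append, ← word_cons, av_cons]
      · exact hav
      · intro x hx
        obtain ⟨C, hC, hxC⟩ := mem_word.mp hx
        have := hblocks2 C hC x hxC
        omega
    · simp only [List.Chain']; rw [List.isChain_cons]
      constructor
      · intro C hC
        have hCmem := List.mem_of_mem_head? hC
        have hCne : C.Nonempty := hne C (by simp [hCmem])
        have hmin1 : minB (insert 1 (B.image (· + 1))) = 1 := by
          apply minB_eq (Finset.mem_insert_self 1 _)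
          intro x hx
          rcases Finset.mem_insert.mp hx with rfl | h
          · exact le_refl 1
          · exact le_of_lt (by have := hblocks2 _ (by simp) x h; omega)
        rw [hmin1]
        have := hblocks2 C (by simp [hCmem]) (minB C) (minB_mem hCne)
        omega
      · exact (List.isChain_cons.mp hch).2
    · exact Finset.mem_insert.mpr (Or.inr (Finset.mem_image.mpr ⟨1, h1B, rfl⟩))

example : True := trivial

lemma T2_eq {n k : ℕ} (hn : 2 ≤ n) (hk1 : 1 ≤ k) (hk2 : k ≤ n - 2) :
    {π ∈ Sset n | π.headD ∅ = insert 1 (Finset.Icc (k + 2) n)} =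
      (fun σ => insert 1 (Finset.Icc (k + 2) n) :: upPart σ) '' Sset k := by
  have hk1' : k + 1 = k + 1 := rfl
  have h1nI : (1 : ℕ) ∉ Finset.Icc (k + 2) n := by rw [Finset.mem_Icc]; omega
  have hsortins : (insert 1 (Finset.Icc (k + 2) n)).sort (· ≤ ·)
      = 1 :: (Finset.Icc (k + 2) n).sort (· ≤ ·) := by
    rw [sort_min_cons (Finset.mem_insert_self 1 _), Finset.erase_insert h1nI]
    intro x hx
    rcases Finset.mem_insert.mp hx with rfl | h
    · exact le_refl 1
    · rw [Finset.mem_Icc] at h; omega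
  ext π
  simp only [Set.mem_setOf_eq, Set.mem_image]
  constructor
  · rintro ⟨hπ, hhead⟩
    obtain ⟨B0, t, rfl⟩ := List.exists_cons_of_ne_nil (Sset_ne_nil (by omega) hπ)
    rw [List.headD_cons] at hhead
    subst hhead
    have hge : ∀ B ∈ t, ∀ x ∈ B, 1 ≤ x := fun B hB x hx =>
      (elem_bounds hπ (by simp [hB]) hx).1
    have hdisjt : ∀ B ∈ t, _root_.Disjoint (insert 1 (Finset.Icc (k + 2) n)) B :=
      (List.pairwise_cons.mp hπ.1.2.1).1
    refine ⟨downPart t, ?_, ?_⟩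
    · rw [mem_Sset_iff_upPart, upPart_downPart hge]
      refine ⟨⟨fun B hB => hπ.1.1 B (by simp [hB]),
        (List.pairwise_cons.mp hπ.1.2.1).2, ?_⟩, ?_, ?_⟩
      · -- foldr t = Icc 2 (k+1)
        ext x
        constructor
        · intro hx
          obtain ⟨B, hB, hxB⟩ := mem_foldr_union.mp hx
          have hxn := elem_bounds hπ (by simp [hB]) hxB
          have hxni : x ∉ insert 1 (Finset.Icc (k + 2) n) :=
            fun h => Finset.disjoint_left.mp (hdisjt B hB) h hxB
          simp only [Finset.mem_insert, Finset.mem_Icc, not_or, not_and, not_le] at hxni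
          rw [Finset.mem_Icc]
          omega
        · intro hx
          rw [Finset.mem_Icc] at hx
          have hx' : x ∈ Finset.Icc 1 n := by rw [Finset.mem_Icc]; omega
          rw [← hπ.1.2.2, foldr_union_cons, Finset.mem_union] at hx'
          rcases hx' with h | h
          · simp only [Finset.mem_insert, Finset.mem_Icc] at h; omega
          · exact h
      · refine hπ.2.1.sublist ?_
        rw [word_cons]
        exact List.sublist_append_right _ _
      · exact hπ.2.2.tail
    · rw [upPart_downPart hge]
  · rintro ⟨σ, hσ, rfl⟩
    rw [mem_Sset_iff_upPart] at hσ
    obtain ⟨⟨hne, hdisj, hcov⟩, hav, hch⟩ := hσ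
    have hblocks : ∀ B ∈ upPart σ, ∀ x ∈ B, 2 ≤ x ∧ x ≤ k + 1 := by
      intro B hB x hx
      have : x ∈ Finset.Icc 2 (k + 1) := hcov ▸ block_subset hB hx
      rw [Finset.mem_Icc] at this; omega
    refine ⟨⟨⟨?_, ?_, ?_⟩, ?_, ?_⟩, rfl⟩
    · rintro B hB
      rcases List.mem_cons.mp hB with rfl | hB'
      · exact ⟨1, by simp⟩
      · exact hne B hB'
    · rw [List.pairwise_cons]
      refine ⟨fun B hB => ?_, hdisj⟩
      rw [Finset.disjoint_insert_left]
      constructor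
      · intro h1B
        exact absurd (hblocks B hB 1 h1B).1 (by omega)
      · rw [Finset.disjoint_left]
        intro a ha haB
        rw [Finset.mem_Icc] at ha
        have := (hblocks B hB a haB).2
        omega
    · rw [foldr_union_cons, hcov]
      ext x
      simp only [Finset.mem_union, Finset.mem_insert, Finset.mem_Icc]
      omega
    · rw [word_cons, hsortins, List.cons_append, av_cons]
      · apply av_append (Finset.pairwise_sort _ _)
        · intro a ha b hb
          rw [Finset.mem_sort] at ha
          rw [Finset.mem_Icc] at ha
          obtain ⟨B, hB, hbB⟩ := mem_word.mp hb
          have := (hblocks B hB b hbB).2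
          omega
        · exact hav
      · intro x hx
        rw [List.mem_append] at hx
        rcases hx with h | h
        · rw [Finset.mem_sort] at h
          rw [Finset.mem_Icc] at h
          omega
        · obtain ⟨B, hB, hxB⟩ := mem_word.mp h
          have := (hblocks B hB x hxB).1
          omega
    · simp only [List.Chain']; rw [List.isChain_cons]
      refine ⟨fun B hB => ?_, hch⟩
      have hBmem := List.mem_of_mem_head? hB
      have hBne := hne B hBmem
      have hmin1 : minB (insert 1 (Finset.Icc (k + 2) n)) = 1 := by
        apply minB_eq (Finset.mem_insert_self 1 _)
        intro x hx
        rcases Finset.mem_insert.mp hx with rfl | h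
        · exact le_refl 1
        · rw [Finset.mem_Icc] at h; omega
      rw [hmin1]
      have := (hblocks B hBmem (minB B) (minB_mem hBne)).1
      omega

example : True := trivial

lemma upPart_injective : Function.Injective upPart :=
  List.map_injective_iff.mpr (Finset.image_injective succ_inj')

lemma g0_injOn {m : ℕ} :
    Set.InjOn (fun σ => ({1} : Finset ℕ) :: upPart σ) (Sset m) := by
  intro a ha b hb h
  simp only [List.cons.injEq, true_and] at h
  exact upPart_injective h

lemma g2_injOn {m : ℕ} (B0 : Finset ℕ) :
    Set.InjOn (fun σ => B0 :: upPart σ) (Sset m) := by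
  intro a ha b hb h
  simp only [List.cons.injEq, true_and] at h
  exact upPart_injective h

lemma g1_injOn {m : ℕ} (hm : 1 ≤ m) :
    Set.InjOn (fun σ => insert 1 ((σ.headD ∅).image (· + 1)) :: upPart σ.tail) (Sset m) := by
  intro a ha b hb h
  obtain ⟨A, s, rfl⟩ := List.exists_cons_of_ne_nil (Sset_ne_nil hm ha)
  obtain ⟨B, s', rfl⟩ := List.exists_cons_of_ne_nil (Sset_ne_nil hm hb)
  simp only [List.headD_cons, List.tail_cons, List.cons.injEq] at h
  have h1A : (1 : ℕ) ∉ A.image (· + 1) := by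
    intro h'
    obtain ⟨y, hy, hy'⟩ := Finset.mem_image.mp h'
    have := (elem_bounds ha (by simp) hy).1
    omega
  have h1B : (1 : ℕ) ∉ B.image (· + 1) := by
    intro h'
    obtain ⟨y, hy, hy'⟩ := Finset.mem_image.mp h'
    have := (elem_bounds hb (by simp) hy).1
    omega
  have hAB : A = B := by
    have := congrArg (fun S => Finset.erase S 1) h.1
    simp only [Finset.erase_insert h1A, Finset.erase_insert h1B] at this
    exact Finset.image_injective succ_inj' this
  have hss : s = s' := upPart_injective h.2
  rw [hAB, hss]

lemma ncard_biUnion_eq {ι α : Type*} (s : Finset ι) (f : ι → Set α)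
    (hfin : ∀ i ∈ s, (f i).Finite)
    (hd : ∀ i ∈ s, ∀ j ∈ s, i ≠ j → Disjoint (f i) (f j)) :
    (⋃ i ∈ s, f i).ncard = ∑ i ∈ s, (f i).ncard := by
  classical
  revert hfin hd
  induction s using Finset.induction with
  | empty => intro _ _; simp
  | @insert a t hat ih =>
    intro hfin hd
    rw [Finset.sum_insert hat]
    have hu : (⋃ i ∈ insert a t, f i) = f a ∪ ⋃ i ∈ t, f i := by
      simp [Set.biUnion_insert]
    have hda : _root_.Disjoint (f a) (⋃ i ∈ t, f i) := by
      rw [Set.disjoint_left]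
      intro x hx hx'
      simp only [Set.mem_iUnion] at hx'
      obtain ⟨i, hi, hxi⟩ := hx'
      have hne : a ≠ i := by rintro rfl; exact hat hi
      exact Set.disjoint_left.mp (hd a (by simp) i (by simp [hi]) hne) hx hxi
    have hft : (⋃ i ∈ t, f i).Finite :=
      Set.Finite.biUnion t.finite_toSet
        (fun i hi => hfin i (Finset.mem_insert_of_mem (by simpa using hi)))
    rw [hu, Set.ncard_union_eq hda (hfin a (by simp)) hft,
      ih (fun i hi => hfin i (by simp [hi]))
      (fun i hi j hj hij => hd i (by simp [hi]) j (by simp [hj]) hij)]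

lemma aSeq_eq_ncard (m : ℕ) : aSeq m = (Sset m).ncard := by
  rw [aSeq, ← Nat.card_coe_set_eq]
  apply Nat.card_congr
  apply Equiv.subtypeEquivRight
  intro π
  constructor
  · rintro ⟨h1, h2, h3⟩
    exact ⟨h1, (avoids213_iff _).mp h2, (mindes_eq_zero_iff _).mp h3⟩
  · rintro ⟨h1, h2, h3⟩
    exact ⟨h1, (avoids213_iff _).mpr h2, (mindes_eq_zero_iff _).mpr h3⟩

example : True := trivial

end Aux

theorem stmt18 (n : ℕ) (hn : 2 ≤ n) :
    aSeq n = aSeq (n - 1) + ∑ k ∈ Finset.Icc 1 (n - 1), aSeq k := by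
  obtain ⟨m, rfl⟩ : ∃ m, n = m + 2 := ⟨n - 2, by omega⟩
  clear hn
  have hm2 : (2 : ℕ) ≤ m + 2 := by omega
  set T0 : Set (List (Finset ℕ)) := {π ∈ Sset (m + 2) | π.headD ∅ = {1}} with hT0
  set T1 : Set (List (Finset ℕ)) := {π ∈ Sset (m + 2) | 2 ∈ π.headD ∅} with hT1
  set T2 : ℕ → Set (List (Finset ℕ)) := fun k =>
    {π ∈ Sset (m + 2) | π.headD ∅ = insert 1 (Finset.Icc (k + 2) (m + 2))} with hT2
  have harith : m + 2 - 2 = m := by omega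
  have harith1 : m + 2 - 1 = m + 1 := by omega
  -- coverage
  have hcover : Sset (m + 2) = T0 ∪ (T1 ∪ ⋃ k ∈ Finset.Icc 1 m, T2 k) := by
    ext π
    constructor
    · intro hπ
      rcases classify hm2 hπ with h | h | ⟨k, hk, h⟩
      · exact Or.inl ⟨hπ, h⟩
      · exact Or.inr (Or.inl ⟨hπ, h⟩)
      · refine Or.inr (Or.inr ?_)
        rw [Set.mem_iUnion₂]
        rw [harith] at hk
        exact ⟨k, hk, hπ, h⟩
    · rintro (h | h | h)
      · exact h.1
      · exact h.1
      · rw [Set.mem_iUnion₂] at h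
        obtain ⟨k, hk, hπ, -⟩ := h
        exact hπ
  -- disjointness facts
  have key02 : ∀ k ∈ Finset.Icc 1 m, ∀ π, π ∈ T0 → π ∈ T2 k → False := by
    intro k hk π h0 h2
    rw [Finset.mem_Icc] at hk
    have := h0.2.symm.trans h2.2
    have hmem : k + 2 ∈ ({1} : Finset ℕ) := by
      rw [this]
      exact Finset.mem_insert_of_mem (by rw [Finset.mem_Icc]; omega)
    simp only [Finset.mem_singleton] at hmem
    omega
  have key12 : ∀ k ∈ Finset.Icc 1 m, ∀ π, π ∈ T1 → π ∈ T2 k → False := by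
    intro k hk π h1 h2
    rw [Finset.mem_Icc] at hk
    have := h1.2
    rw [h2.2] at this
    rcases Finset.mem_insert.mp this with h | h
    · omega
    · rw [Finset.mem_Icc] at h; omega
  have keykk : ∀ k ∈ Finset.Icc 1 m, ∀ k' ∈ Finset.Icc 1 m, k ≠ k' →
      ∀ π, π ∈ T2 k → π ∈ T2 k' → False := by
    intro k hk k' hk' hne π h2 h2'
    rw [Finset.mem_Icc] at hk hk'
    have heq := h2.2.symm.trans h2'.2
    have hmem : k + 2 ∈ insert 1 (Finset.Icc (k' + 2) (m + 2)) := by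
      rw [← heq]
      exact Finset.mem_insert_of_mem (by rw [Finset.mem_Icc]; omega)
    have hmem' : k' + 2 ∈ insert 1 (Finset.Icc (k + 2) (m + 2)) := by
      rw [heq]
      exact Finset.mem_insert_of_mem (by rw [Finset.mem_Icc]; omega)
    rcases Finset.mem_insert.mp hmem with h | h
    · omega
    · rcases Finset.mem_insert.mp hmem' with h' | h'
      · omega
      · rw [Finset.mem_Icc] at h h'; omega
  -- finiteness
  have hfin : ∀ X : Set (List (Finset ℕ)), X ⊆ Sset (m + 2) → X.Finite :=
    fun X hX => (Sset_finite _).subset hX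
  have hsub0 : T0 ⊆ Sset (m + 2) := fun π h => h.1
  have hsub1 : T1 ⊆ Sset (m + 2) := fun π h => h.1
  have hsub2 : ∀ k, T2 k ⊆ Sset (m + 2) := fun k π h => h.1
  have hfinU : (⋃ k ∈ Finset.Icc 1 m, T2 k).Finite :=
    hfin _ (by
      intro π h
      rw [Set.mem_iUnion₂] at h
      obtain ⟨k, hk, hπ, -⟩ := h
      exact hπ)
  -- disjointness for unions
  have hd1U : _root_.Disjoint T1 (⋃ k ∈ Finset.Icc 1 m, T2 k) := by
    rw [Set.disjoint_left]
    intro π h1 h2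
    rw [Set.mem_iUnion₂] at h2
    obtain ⟨k, hk, hk2⟩ := h2
    exact key12 k hk π h1 hk2
  have hd0 : _root_.Disjoint T0 (T1 ∪ ⋃ k ∈ Finset.Icc 1 m, T2 k) := by
    rw [Set.disjoint_left]
    intro π h0 h
    rcases h with h | h
    · have h2 : (2 : ℕ) ∈ π.headD ∅ := h.2
      rw [h0.2] at h2
      simp at h2
    · rw [Set.mem_iUnion₂] at h
      obtain ⟨k, hk, hk2⟩ := h
      exact key02 k hk π h0 hk2
  -- the count
  rw [aSeq_eq_ncard, hcover]
  rw [Set.ncard_union_eq hd0 (hfin _ hsub0) ((hfin _ hsub1).union hfinU)]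
  rw [Set.ncard_union_eq hd1U (hfin _ hsub1) hfinU]
  rw [ncard_biUnion_eq _ _ (fun k _ => hfin _ (hsub2 k))
    (fun k hk k' hk' hne => by
      rw [Set.disjoint_left]
      intro π hπ hπ'
      exact keykk k hk k' hk' hne π hπ hπ')]
  -- identify each term
  have e0 : T0.ncard = aSeq (m + 1) := by
    rw [hT0, T0_eq hm2, Set.ncard_image_of_injOn g0_injOn, aSeq_eq_ncard, harith1]
  have e1 : T1.ncard = aSeq (m + 1) := by
    rw [hT1, T1_eq hm2, Set.ncard_image_of_injOn (g1_injOn (by omega)), aSeq_eq_ncard,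
      harith1]
  have e2 : ∀ k ∈ Finset.Icc 1 m, (T2 k).ncard = aSeq k := by
    intro k hk
    rw [Finset.mem_Icc] at hk
    rw [hT2]
    simp only
    rw [T2_eq hm2 hk.1 (by omega), Set.ncard_image_of_injOn (g2_injOn _), aSeq_eq_ncard]
  rw [e0, e1, Finset.sum_congr rfl e2]
  simp only [harith1]
  rw [Finset.sum_Icc_succ_top (show 1 ≤ m + 1 by omega) aSeq, Finset.sum]
  omega
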